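/- There exists an absolute constant C > 0 such that every finite, undirected, simple k-regular graph on n vertices with k ≥ 1 has at most 2^{(1/2 + C·k^{−1/10})·n} independent sets. -/

import Mathlib

open Finset

namespace Stmt7Aux

variable {V : Type} [Fintype V] [DecidableEq V] (G : SimpleGraph V) [DecidableRel G.Adj]

noncomputable def pick (A : Finset V) (h : A.Nonempty) : V :=
  (A.exists_max_image (fun v => ((G.neighborFinset v) ∩ A).card) h).choose

lemma pick_mem (A : Finset V) (h : A.Nonempty) : pick G A h ∈ A :=
  (A.exists_max_image (fun v => ((G.neighborFinset v) ∩ A).card) h).choose_spec.1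

lemma pick_max (A : Finset V) (h : A.Nonempty) :
    ∀ a ∈ A, ((G.neighborFinset a) ∩ A).card ≤ ((G.neighborFinset (pick G A h)) ∩ A).card :=
  (A.exists_max_image (fun v => ((G.neighborFinset v) ∩ A).card) h).choose_spec.2

noncomputable def run (R : ℕ) (O : Finset V) : ℕ → Finset V → ℕ → Finset V × Finset V
  | 0, A, _ => (∅, A)
  | (fuel+1), A, hl =>
    if h : A.Nonempty ∧ R ≤ A.card ∧ hl ≠ 0 then
      if pick G A h.1 ∈ O then
        (insert (pick G A h.1)
          (run R O fuel (A \ insert (pick G A h.1) (G.neighborFinset (pick G A h.1))) (hl-1)).1,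
         (run R O fuel (A \ insert (pick G A h.1) (G.neighborFinset (pick G A h.1))) (hl-1)).2)
      else run R O fuel (A.erase (pick G A h.1)) hl
    else (∅, A)

lemma run_fst_subset (R : ℕ) (O : Finset V) :
    ∀ (fuel : ℕ) (A : Finset V) (hl : ℕ), (run G R O fuel A hl).1 ⊆ O := by
  intro fuel
  induction fuel with
  | zero => intro A hl; simp [run]
  | succ fuel ih =>
    intro A hl
    rw [run]
    split
    · rename_i h
      split
      · rename_i hv
        exact insert_subset hv (ih _ _)
      · exact ih _ _
    · simp

lemma run_fst_card (R : ℕ) (O : Finset V) :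
    ∀ (fuel : ℕ) (A : Finset V) (hl : ℕ), (run G R O fuel A hl).1.card ≤ hl := by
  intro fuel
  induction fuel with
  | zero => intro A hl; simp [run]
  | succ fuel ih =>
    intro A hl
    rw [run]
    split
    · rename_i h
      split
      · rename_i hv
        calc (insert (pick G A h.1) (run G R O fuel _ (hl-1)).1).card
            ≤ (run G R O fuel _ (hl-1)).1.card + 1 := card_insert_le _ _
          _ ≤ (hl-1) + 1 := by exact Nat.add_le_add_right (ih _ _) 1
          _ ≤ hl := by omega
      · exact ih _ _
    · simp

lemma run_cover (R : ℕ) (O : Finset V) (hO : ∀ x ∈ O, ∀ y ∈ O, ¬ G.Adj x y) :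
    ∀ (fuel : ℕ) (A : Finset V) (hl : ℕ),
      O ∩ A ⊆ (run G R O fuel A hl).1 ∪ (run G R O fuel A hl).2 := by
  intro fuel
  induction fuel with
  | zero =>
    intro A hl
    simp only [run]
    intro w hw
    simp only [mem_inter] at hw
    simp [hw.2]
  | succ fuel ih =>
    intro A hl
    rw [run]
    split
    · rename_i h
      set v := pick G A h.1 with hv
      split
      · rename_i hvO
        intro w hw
        simp only [mem_inter] at hw
        by_cases hwv : w = v
        · subst hwv
          simp
        · have hwN : w ∉ insert v (G.neighborFinset v) := by
            simp only [mem_insert, SimpleGraph.mem_neighborFinset]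
            push_neg
            exact ⟨hwv, hO v hvO w hw.1⟩
          have : w ∈ O ∩ (A \ insert v (G.neighborFinset v)) := by
            simp only [mem_inter, mem_sdiff]
            exact ⟨hw.1, hw.2, hwN⟩
          have := ih _ (hl-1) this
          simp only [mem_union] at this ⊢
          rcases this with h1 | h2
          · exact Or.inl (mem_insert_of_mem h1)
          · exact Or.inr h2
      · rename_i hvO
        intro w hw
        simp only [mem_inter] at hw
        have hwv : w ≠ v := by rintro rfl; exact hvO hw.1
        apply ih _ hl
        simp only [mem_inter, mem_erase]
        exact ⟨hw.1, hwv, hw.2⟩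
    · intro w hw
      simp only [mem_inter] at hw
      simp [hw.2]

lemma run_det (R : ℕ) :
    ∀ (fuel : ℕ) (A : Finset V) (hl : ℕ) (O O' : Finset V),
      (run G R O fuel A hl).1 ⊆ O' → O' ⊆ O →
      run G R O' fuel A hl = run G R O fuel A hl := by
  intro fuel
  induction fuel with
  | zero => intro A hl O O' _ _; rfl
  | succ fuel ih =>
    intro A hl O O' hsub hOO
    rw [run]
    conv_rhs => rw [run]
    split
    · rename_i h
      set v := pick G A h.1 with hv
      by_cases hvO : v ∈ O
      · rw [if_pos hvO]
        have hrun : (run G R O (fuel+1) A hl).1 =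
            insert v (run G R O fuel (A \ insert v (G.neighborFinset v)) (hl-1)).1 := by
          rw [run]; rw [dif_pos h, if_pos hvO]
        rw [hrun] at hsub
        have hvO' : v ∈ O' := hsub (mem_insert_self _ _)
        rw [if_pos hvO']
        have : run G R O' fuel (A \ insert v (G.neighborFinset v)) (hl-1) =
            run G R O fuel (A \ insert v (G.neighborFinset v)) (hl-1) := by
          apply ih _ _ O O'
          · intro x hx
            exact hsub (mem_insert_of_mem hx)
          · exact hOO
        rw [this]
      · rw [if_neg hvO]
        have hvO' : v ∉ O' := fun hx => hvO (hOO hx)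
        rw [if_neg hvO']
        have hrun : (run G R O (fuel+1) A hl) = run G R O fuel (A.erase v) hl := by
          rw [run]; rw [dif_pos h, if_neg hvO]
        rw [hrun] at hsub
        exact ih _ _ O O' hsub hOO
    · rfl

lemma run_snd_card (R Dd : ℕ)
    (hDeg : ∀ B : Finset V, R ≤ B.card → ∃ w ∈ B, Dd ≤ ((G.neighborFinset w) ∩ B).card)
    (O : Finset V) :
    ∀ (fuel : ℕ) (A : Finset V) (hl : ℕ), A.card ≤ fuel →
      (run G R O fuel A hl).2.card ≤ max (R-1) (A.card - hl*(Dd+1)) := by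
  intro fuel
  induction fuel with
  | zero =>
    intro A hl hA
    simp only [run]
    omega
  | succ fuel ih =>
    intro A hl hA
    rw [run]
    split
    · rename_i h
      set v := pick G A h.1 with hv
      have hvA : v ∈ A := pick_mem G A h.1
      have hdeg : Dd ≤ ((G.neighborFinset v) ∩ A).card := by
        obtain ⟨w, hwB, hwd⟩ := hDeg A h.2.1
        exact le_trans hwd (pick_max G A h.1 w hwB)
      split
      · rename_i hvO
        -- removal of closed neighborhood: at least Dd+1 vertices
        have hsub : insert v ((G.neighborFinset v) ∩ A) ⊆ A ∩ insert v (G.neighborFinset v) := by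
          intro x hx
          simp only [mem_insert, mem_inter, SimpleGraph.mem_neighborFinset] at hx ⊢
          rcases hx with rfl | ⟨hx1, hx2⟩
          · exact ⟨hvA, Or.inl rfl⟩
          · exact ⟨hx2, Or.inr hx1⟩
        have hcard1 : Dd + 1 ≤ (A ∩ insert v (G.neighborFinset v)).card := by
          have h1 : ((G.neighborFinset v) ∩ A).card + 1 ≤ (insert v ((G.neighborFinset v) ∩ A)).card := by
            rw [card_insert_of_notMem]
            simp only [mem_inter, SimpleGraph.mem_neighborFinset]
            rintro ⟨hc, -⟩
            exact G.loopless.irrefl v hc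
          have := card_le_card hsub
          omega
        have hsd : (A \ insert v (G.neighborFinset v)).card ≤ A.card - (Dd+1) := by
          have := card_inter_add_card_sdiff A (insert v (G.neighborFinset v))
          omega
        have hfuel : (A \ insert v (G.neighborFinset v)).card ≤ fuel := by
          have h2 : (A \ insert v (G.neighborFinset v)).card < A.card := by
            apply card_lt_card
            constructor
            · exact sdiff_subset
            · intro hsub2
              have := hsub2 hvA
              simp at this
          omega
        have := ih (A \ insert v (G.neighborFinset v)) (hl-1) hfuel
        have hhl : hl ≠ 0 := h.2.2
        -- (A.card - (Dd+1)) - (hl-1)*(Dd+1) ≤ A.card - hl*(Dd+1)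
        have harith : A.card - (Dd+1) - (hl-1)*(Dd+1) ≤ A.card - hl*(Dd+1) := by
          obtain ⟨m, rfl⟩ : ∃ m, hl = m + 1 := ⟨hl - 1, by omega⟩
          rw [Nat.sub_sub, Nat.add_sub_cancel]
          have h3 : (Dd + 1) + m * (Dd + 1) = (m+1) * (Dd+1) := by ring
          rw [h3]
        calc (run G R O fuel (A \ insert v (G.neighborFinset v)) (hl-1)).2.card
            ≤ max (R-1) ((A \ insert v (G.neighborFinset v)).card - (hl-1)*(Dd+1)) := this
          _ ≤ max (R-1) (A.card - hl*(Dd+1)) := by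
              apply max_le_max (le_refl _)
              exact le_trans (Nat.sub_le_sub_right hsd _) harith
      · have hfuel : (A.erase v).card ≤ fuel := by
          have := card_erase_of_mem hvA
          have hpos : 1 ≤ A.card := card_pos.mpr h.1
          omega
        have := ih (A.erase v) hl hfuel
        have : (run G R O fuel (A.erase v) hl).2.card ≤ max (R-1) (A.card - hl*(Dd+1)) := by
          refine le_trans this (max_le_max (le_refl _) ?_)
          have := card_erase_of_mem hvA
          omega
        exact this
    · rename_i h
      simp only [not_and_or, not_nonempty_iff_eq_empty, not_le, Ne, not_not] at h
      rcases h with h1 | h2 | h3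
      · subst h1; simp
      · simp only []
        omega
      · subst h3
        simp only [Nat.zero_mul, Nat.sub_zero]
        omega


lemma sum_swap_adj (B : Finset V) :
    ∑ w ∈ B, ((G.neighborFinset w) \ B).card = ∑ u ∈ univ \ B, ((G.neighborFinset u) ∩ B).card := by
  have h1 : ∀ w : V, (G.neighborFinset w) \ B = (univ \ B).filter (fun u => G.Adj w u) := by
    intro w; ext u
    simp [SimpleGraph.mem_neighborFinset, and_comm]
  have h2 : ∀ u : V, (G.neighborFinset u) ∩ B = B.filter (fun w => G.Adj u w) := by
    intro u; ext w
    simp [SimpleGraph.mem_neighborFinset, and_comm]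
  simp_rw [h1, h2, card_filter]
  rw [Finset.sum_comm]
  apply Finset.sum_congr rfl
  intro u _
  apply Finset.sum_congr rfl
  intro w _
  simp [G.adj_comm]

lemma exists_big_degree {k : ℕ} (hreg : G.IsRegularOfDegree k) (B : Finset V) (hB : B.Nonempty) :
    ∃ w ∈ B, (k:ℝ) * (2*B.card - Fintype.card V) ≤ (B.card:ℝ) * ((G.neighborFinset w) ∩ B).card := by
  obtain ⟨v, hvB, hvmax⟩ := B.exists_max_image (fun w => ((G.neighborFinset w) ∩ B).card) hB
  refine ⟨v, hvB, ?_⟩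
  have hBn : B.card ≤ Fintype.card V := card_le_card (subset_univ B) |>.trans (by rw [card_univ])
  -- sum of inner degrees
  have hsplit : ∑ w ∈ B, ((G.neighborFinset w) ∩ B).card
      + ∑ w ∈ B, ((G.neighborFinset w) \ B).card = B.card * k := by
    rw [← Finset.sum_add_distrib]
    have : ∀ w ∈ B, ((G.neighborFinset w) ∩ B).card + ((G.neighborFinset w) \ B).card = k := by
      intro w _
      rw [card_inter_add_card_sdiff, SimpleGraph.card_neighborFinset_eq_degree]
      exact hreg w
    rw [Finset.sum_congr rfl this, Finset.sum_const, smul_eq_mul]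
  have hout : ∑ w ∈ B, ((G.neighborFinset w) \ B).card ≤ (Fintype.card V - B.card) * k := by
    rw [sum_swap_adj]
    calc ∑ u ∈ univ \ B, ((G.neighborFinset u) ∩ B).card
        ≤ ∑ u ∈ univ \ B, k := by
          apply Finset.sum_le_sum
          intro u _
          calc ((G.neighborFinset u) ∩ B).card ≤ (G.neighborFinset u).card :=
                card_le_card inter_subset_left
            _ = k := by rw [SimpleGraph.card_neighborFinset_eq_degree]; exact hreg u
      _ = (Fintype.card V - B.card) * k := by
          rw [Finset.sum_const, smul_eq_mul, card_sdiff_of_subset (subset_univ B), card_univ]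
  have hmax : ∑ w ∈ B, ((G.neighborFinset w) ∩ B).card ≤ B.card * ((G.neighborFinset v) ∩ B).card := by
    calc ∑ w ∈ B, ((G.neighborFinset w) ∩ B).card
        ≤ B.card • ((G.neighborFinset v) ∩ B).card := sum_le_card_nsmul _ _ _ (fun w hw => hvmax w hw)

      _ = B.card * ((G.neighborFinset v) ∩ B).card := smul_eq_mul _ _
  -- combine over ℝ
  have h1 : (B.card : ℝ) * k - (Fintype.card V - B.card) * k
      ≤ (B.card:ℝ) * ((G.neighborFinset v) ∩ B).card := by
    have c1 : ((∑ w ∈ B, ((G.neighborFinset w) ∩ B).card : ℕ) : ℝ)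
        ≤ (B.card:ℝ) * ((G.neighborFinset v) ∩ B).card := by
      exact_mod_cast hmax
    have c2 : (B.card : ℝ) * k - (Fintype.card V - B.card) * k
        ≤ ((∑ w ∈ B, ((G.neighborFinset w) ∩ B).card : ℕ) : ℝ) := by
      have e1 : ((∑ w ∈ B, ((G.neighborFinset w) ∩ B).card : ℕ) : ℝ)
          = (B.card:ℝ) * k - ((∑ w ∈ B, ((G.neighborFinset w) \ B).card : ℕ) : ℝ) := by
        have h4 := congrArg (fun m : ℕ => (m : ℝ)) hsplit
        push_cast at h4 ⊢
        linarith
      rw [e1]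
      have c3 : ((∑ w ∈ B, ((G.neighborFinset w) \ B).card : ℕ) : ℝ)
          ≤ ((Fintype.card V : ℝ) - B.card) * k := by
        calc ((∑ w ∈ B, ((G.neighborFinset w) \ B).card : ℕ) : ℝ)
            ≤ (((Fintype.card V - B.card) * k : ℕ) : ℝ) := by exact_mod_cast hout
          _ = ((Fintype.card V : ℝ) - B.card) * k := by
              push_cast [Nat.cast_sub hBn]
              ring
      linarith
    linarith
  calc (k:ℝ) * (2*B.card - Fintype.card V)
      = (B.card : ℝ) * k - ((Fintype.card V : ℝ) - B.card) * k := by ring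
    _ ≤ (B.card:ℝ) * ((G.neighborFinset v) ∩ B).card := h1

lemma count_le (R Dd q : ℕ)
    (hDeg : ∀ B : Finset V, R ≤ B.card → ∃ w ∈ B, Dd ≤ ((G.neighborFinset w) ∩ B).card)
    (hmax : max (R-1) (Fintype.card V - q*(Dd+1)) ≤ R) :
    ((univ : Finset V).powerset.filter
        (fun s : Finset V => ∀ x ∈ s, ∀ y ∈ s, ¬ G.Adj x y)).card
      ≤ ((univ : Finset V).powerset.filter (fun H : Finset V => H.card ≤ q)).card * 2^R := by
  classical
  set n := Fintype.card V with hn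
  set Ind := ((univ : Finset V).powerset.filter
      (fun s : Finset V => ∀ x ∈ s, ∀ y ∈ s, ¬ G.Adj x y)) with hInd
  set T := ((univ : Finset V).powerset.filter (fun H : Finset V => H.card ≤ q)) with hT
  have hmap : ∀ I ∈ Ind, (run G R I n univ q).1 ∈ T := by
    intro I _
    rw [hT, mem_filter]
    exact ⟨mem_powerset.mpr (subset_univ _), run_fst_card G R I n univ q⟩
  rw [card_eq_sum_card_fiberwise hmap]
  have hfib : ∀ H ∈ T, (Ind.filter (fun I => (run G R I n univ q).1 = H)).card ≤ 2^R := by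
    intro H _
    set A2 := (run G R H n univ q).2 with hA2def
    have hA2 : A2.card ≤ R := by
      refine le_trans (run_snd_card G R Dd hDeg H n univ q (by rw [card_univ])) ?_
      rw [card_univ]
      exact hmax
    calc (Ind.filter (fun I => (run G R I n univ q).1 = H)).card
        ≤ A2.powerset.card := by
          apply card_le_card_of_injOn (fun I => I \ H)
          · intro I hI
            rw [mem_coe, mem_filter] at hI
            obtain ⟨hI1, hI2⟩ := hI
            rw [hInd, mem_filter] at hI1
            have hHI : H ⊆ I := by
              rw [← hI2]
              exact run_fst_subset G R I n univ q
            have hdet : run G R H n univ q = run G R I n univ q := by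
              apply run_det G R n univ q I H
              · rw [hI2]
              · exact hHI
            have hcov : I ⊆ (run G R I n univ q).1 ∪ (run G R I n univ q).2 := by
              have := run_cover G R I hI1.2 n univ q
              rwa [inter_univ] at this
            rw [mem_coe, mem_powerset]
            intro x hx
            rw [mem_sdiff] at hx
            have := hcov hx.1
            rw [mem_union, hI2] at this
            rcases this with h | h
            · exact absurd h hx.2
            · rw [hA2def, hdet]; exact h
          · intro I1 hI1 I2 hI2 heq
            have heq' : I1 \ H = I2 \ H := heq
            simp only [coe_filter, Set.mem_setOf_eq] at hI1 hI2
            have hH1 : H ⊆ I1 := by rw [← hI1.2]; exact run_fst_subset G R I1 n univ q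
            have hH2 : H ⊆ I2 := by rw [← hI2.2]; exact run_fst_subset G R I2 n univ q
            have : I1 \ H ∪ H = I2 \ H ∪ H := by rw [heq']
            rwa [sdiff_union_of_subset hH1, sdiff_union_of_subset hH2] at this
      _ = 2^(A2.card) := by rw [card_powerset]
      _ ≤ 2^R := Nat.pow_le_pow_right (by norm_num) hA2
  calc ∑ H ∈ T, (Ind.filter (fun I => (run G R I n univ q).1 = H)).card
      ≤ ∑ H ∈ T, 2^R := Finset.sum_le_sum hfib
    _ = T.card * 2^R := by rw [Finset.sum_const, smul_eq_mul]


lemma Tcard_le (q : ℕ) (x : ℝ) (hx0 : 0 < x) (hx1 : x ≤ 1) :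
    (((univ : Finset V).powerset.filter (fun H : Finset V => H.card ≤ q)).card : ℝ) * x^q
      ≤ (1+x)^(Fintype.card V) := by
  have hsum : (1+x)^(Fintype.card V) = ∑ H ∈ (univ : Finset V).powerset, x^(H.card) := by
    calc (1+x)^(Fintype.card V) = ∏ _i ∈ (univ : Finset V), (x + 1) := by
          rw [prod_const, card_univ]; ring
      _ = ∑ t ∈ (univ : Finset V).powerset, (∏ _i ∈ t, x) * ∏ _i ∈ univ \ t, (1:ℝ) :=
          Finset.prod_add _ _ _
      _ = ∑ H ∈ (univ : Finset V).powerset, x^(H.card) := by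
          apply Finset.sum_congr rfl
          intro t _
          rw [prod_const, prod_const, one_pow, mul_one]
  rw [hsum]
  calc (((univ : Finset V).powerset.filter (fun H : Finset V => H.card ≤ q)).card : ℝ) * x^q
      = ∑ _H ∈ (univ : Finset V).powerset.filter (fun H : Finset V => H.card ≤ q), x^q := by
        rw [Finset.sum_const, nsmul_eq_mul]
    _ ≤ ∑ H ∈ (univ : Finset V).powerset.filter (fun H : Finset V => H.card ≤ q), x^(H.card) := by
        apply Finset.sum_le_sum
        intro H hH
        rw [mem_filter] at hH
        exact pow_le_pow_of_le_one hx0.le hx1 hH.2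
    _ ≤ ∑ H ∈ (univ : Finset V).powerset, x^(H.card) := by
        apply Finset.sum_le_sum_of_subset_of_nonneg (filter_subset _ _)
        intro H _ _
        positivity

set_option maxHeartbeats 2000000 in
theorem main {W : Type} [Fintype W] (G : SimpleGraph W) [DecidableRel G.Adj] (k : ℕ)
    (hk : 1 ≤ k) (hreg : G.IsRegularOfDegree k) :
    ((Finset.univ.powerset.filter
        (fun s : Finset W => ∀ x ∈ s, ∀ y ∈ s, ¬ G.Adj x y)).card : ℝ)
      ≤ 2 ^ ((1 / 2 + 100 * (k : ℝ) ^ (-(1 / 10) : ℝ)) * (Fintype.card W : ℝ)) := by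
  classical
  by_cases hV : Fintype.card W = 0
  · have huniv : (univ : Finset W) = ∅ := by
      rw [← Finset.card_eq_zero, card_univ]; exact hV
    rw [hV, Nat.cast_zero, mul_zero, Real.rpow_zero]
    rw [huniv, powerset_empty]
    rw [Finset.filter_singleton, if_pos (by simp)]
    simp
  -- main case
  have hn1 : 1 ≤ Fintype.card W := Nat.one_le_iff_ne_zero.mpr hV
  set n := Fintype.card W with hn
  obtain ⟨v0⟩ : Nonempty W := Fintype.card_pos_iff.mp hn1
  have hkn : k < n := by
    have := G.degree_lt_card_verts v0
    rwa [hreg v0] at this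
  have hn2 : 2 ≤ n := by omega
  have hk0 : (0:ℝ) < (k:ℝ) := by exact_mod_cast hk
  have hk1 : (1:ℝ) ≤ (k:ℝ) := by exact_mod_cast hk
  set ε : ℝ := (k:ℝ) ^ (-(1/10) : ℝ) with hεdef
  have hε0 : 0 < ε := Real.rpow_pos_of_pos hk0 _
  have hε1 : ε ≤ 1 := Real.rpow_le_one_of_one_le_of_nonpos hk1 (by norm_num)
  set b : ℝ := (k:ℝ) ^ ((9:ℝ)/10) with hbdef
  set a : ℝ := (k:ℝ) ^ ((4:ℝ)/5) with hadef
  have hb1 : 1 ≤ b := by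
    calc (1:ℝ) = 1 ^ ((9:ℝ)/10) := (Real.one_rpow _).symm
      _ ≤ b := Real.rpow_le_rpow zero_le_one hk1 (by norm_num)
  have ha1 : 1 ≤ a := by
    calc (1:ℝ) = 1 ^ ((4:ℝ)/5) := (Real.one_rpow _).symm
      _ ≤ a := Real.rpow_le_rpow zero_le_one hk1 (by norm_num)
  have hba : b * ε = a := by
    rw [hbdef, hεdef, hadef, ← Real.rpow_add hk0]
    norm_num
  have hkε : (k:ℝ) * ε = b := by
    rw [hεdef, hbdef]
    nth_rewrite 1 [← Real.rpow_one (k:ℝ)]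
    rw [← Real.rpow_add hk0]
    norm_num
  have hknR : (k:ℝ) ≤ (n:ℝ) := by exact_mod_cast hkn.le
  have hεn : 1 ≤ ε * n := by
    calc (1:ℝ) ≤ b := hb1
      _ = (k:ℝ) * ε := hkε.symm
      _ ≤ (n:ℝ) * ε := by
          apply mul_le_mul_of_nonneg_right hknR hε0.le
      _ = ε * n := mul_comm _ _
  set Dd : ℕ := ⌈b⌉₊ with hDdef
  have hD1 : 1 ≤ Dd := by
    rw [hDdef]
    exact Nat.one_le_iff_ne_zero.mpr (by
      intro h
      have := Nat.ceil_eq_zero.mp h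
      linarith)
  have hDlb : b ≤ (Dd:ℝ) := Nat.le_ceil b
  have hDub : (Dd:ℝ) < b + 1 := Nat.ceil_lt_add_one (by linarith)
  set R : ℕ := ⌈(1/2 + ε/2) * (n:ℝ)⌉₊ with hRdef
  have hR0 : 0 < R := by
    rw [hRdef]
    apply Nat.ceil_pos.mpr
    have : (0:ℝ) < (n:ℝ) := by exact_mod_cast hn1
    positivity
  have hRlb : (1/2 + ε/2) * (n:ℝ) ≤ (R:ℝ) := Nat.le_ceil _
  have hRub : (R:ℝ) ≤ (1/2 + ε/2) * (n:ℝ) + 1 := by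
    have : (0:ℝ) ≤ (1/2 + ε/2) * (n:ℝ) := by positivity
    exact (Nat.ceil_lt_add_one this).le
  set m : ℕ := 2*(Dd+1) with hmdef
  set q : ℕ := n / m + 1 with hqdef
  have hm4 : 4 ≤ m := by omega
  have hqn : q ≤ n := by
    have h1 : n / m ≤ n / 4 := Nat.div_le_div_left hm4 (by norm_num)
    have h2 : n / 4 ≤ n / 2 := Nat.div_le_div_left (by norm_num) (by norm_num)
    omega
  have hnqm : n < q * m := by
    have := Nat.lt_div_mul_add (show 0 < m by omega) (a := n)
    calc n < n / m * m + m := this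
      _ = q * m := by rw [hqdef]; ring
  have h2R : n ≤ 2 * R := by
    have hr : (n:ℝ) ≤ 2*(R:ℝ) := by
      have hn0 : (0:ℝ) ≤ (n:ℝ) := by positivity
      nlinarith
    exact_mod_cast hr
  have hmaxR : max (R-1) (n - q*(Dd+1)) ≤ R := by
    have : 2*(q*(Dd+1)) = q * m := by rw [hmdef]; ring
    omega
  have hq1 : 1 ≤ q := by rw [hqdef]; exact Nat.le_add_left 1 _
  -- degree condition
  have hDeg : ∀ B : Finset W, R ≤ B.card → ∃ w ∈ B, Dd ≤ ((G.neighborFinset w) ∩ B).card := by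
    intro B hB
    have hBne : B.Nonempty := card_pos.mp (lt_of_lt_of_le hR0 hB)
    obtain ⟨w, hw, hineq⟩ := exists_big_degree G hreg B hBne
    refine ⟨w, hw, ?_⟩
    have hBn : B.card ≤ n := by
      rw [hn]
      exact card_le_univ B
    have hBR : (1/2 + ε/2) * (n:ℝ) ≤ (B.card:ℝ) := le_trans hRlb (by exact_mod_cast hB)
    have hBnR : (B.card:ℝ) ≤ (n:ℝ) := by exact_mod_cast hBn
    have hB0 : (0:ℝ) < (B.card:ℝ) := by
      have := card_pos.mpr hBne
      exact_mod_cast this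
    have key : b * (B.card:ℝ) ≤ (B.card:ℝ) * ((G.neighborFinset w ∩ B).card :ℝ) := by
      have h1 : ε * (B.card:ℝ) ≤ 2*(B.card:ℝ) - (n:ℝ) := by nlinarith
      have h2 : (k:ℝ) * (ε * (B.card:ℝ)) ≤ (k:ℝ) * (2*(B.card:ℝ) - (n:ℝ)) :=
        mul_le_mul_of_nonneg_left h1 hk0.le
      calc b * (B.card:ℝ) = (k:ℝ) * (ε * (B.card:ℝ)) := by rw [← hkε]; ring
        _ ≤ (k:ℝ) * (2*(B.card:ℝ) - (n:ℝ)) := h2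
        _ ≤ (B.card:ℝ) * ((G.neighborFinset w ∩ B).card :ℝ) := by
            rw [← hn] at hineq
            exact hineq
    have hbd : b ≤ ((G.neighborFinset w ∩ B).card :ℝ) := by
      have := (mul_le_mul_iff_of_pos_right hB0).mp (by linarith [key] : b * (B.card:ℝ) ≤ ((G.neighborFinset w ∩ B).card :ℝ) * (B.card:ℝ))
      exact this
    rw [hDdef]
    exact Nat.ceil_le.mpr hbd
  -- counting
  have hcount := count_le G R Dd q hDeg (by rw [← hn]; exact hmaxR)
  clear_value Dd R m q b
  set Ind := ((univ : Finset W).powerset.filter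
      (fun s : Finset W => ∀ x ∈ s, ∀ y ∈ s, ¬ G.Adj x y)) with hIndDef
  set T := ((univ : Finset W).powerset.filter (fun H : Finset W => H.card ≤ q)) with hTdef
  -- real arithmetic
  set x : ℝ := (q:ℝ)/(n:ℝ) with hxdef
  have hnR0 : (0:ℝ) < (n:ℝ) := by exact_mod_cast hn1
  have hqR0 : (0:ℝ) < (q:ℝ) := by exact_mod_cast hq1
  have hx0 : 0 < x := by positivity
  have hx1 : x ≤ 1 := by
    rw [hxdef, div_le_one hnR0]
    exact_mod_cast hqn
  have hchern := Tcard_le (V := W) q x hx0 hx1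
  have hexp : (1+x)^n ≤ 3^q := by
    have h1 : (1+x) ≤ Real.exp x := by
      have := Real.add_one_le_exp x
      linarith
    have h2 : (1+x)^n ≤ (Real.exp x)^n := by
      apply pow_le_pow_left₀ (by positivity) h1
    have h3 : (Real.exp x)^n = Real.exp ((n:ℝ) * x) := (Real.exp_nat_mul x n).symm
    have h4 : (n:ℝ) * x = (q:ℝ) := by
      rw [hxdef]
      field_simp
    have h5 : Real.exp ((q:ℝ)) = (Real.exp 1)^q := by
      rw [← Real.exp_nat_mul]
      norm_num
    have h6 : (Real.exp 1)^q ≤ 3^q := by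
      apply pow_le_pow_left₀ (Real.exp_pos 1).le
      have := Real.exp_one_lt_d9
      linarith
    calc (1+x)^n ≤ (Real.exp x)^n := h2
      _ = Real.exp ((n:ℝ) * x) := h3
      _ = (Real.exp 1)^q := by rw [h4, h5]
      _ ≤ 3^q := h6
  have hT3 : (T.card : ℝ) ≤ (3/x)^q := by
    have hxq : (0:ℝ) < x^q := by positivity
    rw [div_pow]
    rw [le_div_iff₀ hxq]
    calc (T.card : ℝ) * x^q ≤ (1+x)^n := by
          rw [hTdef]; exact hchern
      _ ≤ 3^q := hexp
  have h3x : 3/x ≤ 32*(k:ℝ) := by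
    have hnq : (n:ℝ) < (q:ℝ) * (m:ℝ) := by exact_mod_cast hnqm
    have h1 : 3/x = 3*(n:ℝ)/(q:ℝ) := by
      rw [hxdef]
      field_simp
    have h2 : (n:ℝ)/(q:ℝ) ≤ (m:ℝ) := by
      rw [div_le_iff₀ hqR0]
      have hcomm : (q:ℝ)*(m:ℝ) = (m:ℝ)*(q:ℝ) := mul_comm _ _
      linarith
    have hmub : (m:ℝ) ≤ 6*b := by
      have : (m:ℝ) = 2*((Dd:ℝ)+1) := by rw [hmdef]; push_cast; ring
      rw [this]
      nlinarith
    have h3 : 3*((n:ℝ)/(q:ℝ)) ≤ 3*(m:ℝ) := by linarith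
    calc 3/x = 3*((n:ℝ)/(q:ℝ)) := by rw [h1]; ring
      _ ≤ 3*(m:ℝ) := h3
      _ ≤ 18*b := by linarith
      _ = 18*((k:ℝ)*ε) := by rw [hkε]
      _ ≤ 32*(k:ℝ) := by nlinarith
  have hTk : (T.card : ℝ) ≤ (32*(k:ℝ))^q := by
    refine le_trans hT3 (pow_le_pow_left₀ ?_ h3x q)
    positivity
  -- assemble
  have h32pos : (0:ℝ) < 32*(k:ℝ) := by positivity
  set c : ℝ := Real.logb 2 (32*(k:ℝ)) with hcdef
  have h2c : (2:ℝ) ^ c = 32*(k:ℝ) := Real.rpow_logb (by norm_num) (by norm_num) h32pos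
  have hkpow : ((32*(k:ℝ))^q : ℝ) = (2:ℝ) ^ (c * (q:ℝ)) := by
    rw [← h2c, ← Real.rpow_natCast ((2:ℝ)^c) q, ← Real.rpow_mul (by norm_num)]
  have h2R' : ((2:ℝ)^R : ℝ) = (2:ℝ) ^ ((R:ℝ)) := (Real.rpow_natCast 2 R).symm
  -- exponent bound
  have hc7 : c ≤ 7*a := by
    have hL : (0.6931471803:ℝ) < Real.log 2 := Real.log_two_gt_d9
    have hL1 : Real.log 2 ≤ 1 := by
      have := Real.log_le_sub_one_of_pos (by norm_num : (0:ℝ) < 2)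
      linarith
    have hlogk : Real.log (k:ℝ) = (5/4) * Real.log a := by
      rw [hadef, Real.log_rpow hk0]
      ring
    have hloga : Real.log a ≤ a - 1 := Real.log_le_sub_one_of_pos (by linarith)
    have hlog32 : Real.log (32:ℝ) = 5 * Real.log 2 := by
      have : (32:ℝ) = 2^(5:ℕ) := by norm_num
      rw [this, Real.log_pow]
      push_cast
      ring
    have hlogmul : Real.log (32*(k:ℝ)) = Real.log 32 + Real.log (k:ℝ) :=
      Real.log_mul (by norm_num) (by linarith)
    have hkey : Real.log (32*(k:ℝ)) ≤ 7*a * Real.log 2 := by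
      rw [hlogmul, hlog32, hlogk]
      have key2 : (0:ℝ) ≤ (7*Real.log 2 - 5/4)*(a - 1) := by
        apply mul_nonneg
        · linarith
        · linarith
      nlinarith
    rw [hcdef, Real.logb, div_le_iff₀ (by linarith : (0:ℝ) < Real.log 2)]
    linarith [hkey]
  have hqub : (q:ℝ) ≤ (n:ℝ)/(2*b) + 1 := by
    have h1 : ((n/m : ℕ) : ℝ) ≤ (n:ℝ)/(m:ℝ) := Nat.cast_div_le
    have h2 : (2*b) ≤ (m:ℝ) := by
      have : (m:ℝ) = 2*((Dd:ℝ)+1) := by rw [hmdef]; push_cast; ring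
      rw [this]
      linarith
    have h3 : (n:ℝ)/(m:ℝ) ≤ (n:ℝ)/(2*b) := by
      apply div_le_div_of_nonneg_left hnR0.le (by linarith) h2
    have h4 : (q:ℝ) = ((n/m : ℕ) : ℝ) + 1 := by rw [hqdef]; push_cast; ring
    linarith
  have hexpbound : c * (q:ℝ) + (R:ℝ) ≤ (1/2 + 100*ε) * (n:ℝ) := by
    have hq0 : (0:ℝ) ≤ (q:ℝ) := by positivity
    have h1 : c * (q:ℝ) ≤ 7*a*(q:ℝ) := mul_le_mul_of_nonneg_right hc7 hq0
    have hb0 : (0:ℝ) < b := by linarith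
    have h2 : 7*a*((n:ℝ)/(2*b) + 1) = 3.5*ε*(n:ℝ) + 7*a := by
      rw [← hba]
      field_simp
      ring
    have h3 : 7*a*(q:ℝ) ≤ 3.5*ε*(n:ℝ) + 7*a := by
      rw [← h2]
      apply mul_le_mul_of_nonneg_left hqub (by linarith)
    have h4 : a ≤ ε * (n:ℝ) := by
      calc a = b * ε := hba.symm
        _ = ((k:ℝ)*ε)*ε := by rw [hkε]
        _ ≤ ((n:ℝ)*ε)*ε := by nlinarith
        _ ≤ (n:ℝ)*ε*1 := by nlinarith
        _ = ε*(n:ℝ) := by ring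
    nlinarith
  have hmono : (2:ℝ) ^ (c * (q:ℝ) + (R:ℝ)) ≤ (2:ℝ) ^ ((1/2 + 100*ε) * (n:ℝ)) :=
    Real.rpow_le_rpow_of_exponent_le one_le_two hexpbound
  -- final chain
  have hfinal : (Ind.card : ℝ) ≤ (2:ℝ) ^ ((1/2 + 100*ε) * (n:ℝ)) := by
    calc (Ind.card : ℝ) ≤ (T.card : ℝ) * (2:ℝ)^R := by
          have := hcount
          exact_mod_cast this
      _ ≤ (32*(k:ℝ))^q * (2:ℝ)^R := by
          apply mul_le_mul_of_nonneg_right hTk (by positivity)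
      _ = (2:ℝ) ^ (c * (q:ℝ)) * (2:ℝ) ^ ((R:ℝ)) := by rw [hkpow, h2R']
      _ = (2:ℝ) ^ (c * (q:ℝ) + (R:ℝ)) := (Real.rpow_add (by norm_num) _ _).symm
      _ ≤ (2:ℝ) ^ ((1/2 + 100*ε) * (n:ℝ)) := hmono
  have hrhs : (2:ℝ) ^ ((1/2 + 100*ε) * (n:ℝ))
      = 2 ^ ((1 / 2 + 100 * (k : ℝ) ^ (-(1 / 10) : ℝ)) * (Fintype.card W : ℝ)) := by
    rw [hεdef, hn]
  rw [← hrhs]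
  refine le_trans (le_of_eq ?_) hfinal
  rw [hIndDef]
  congr 1
  congr 1
  apply Finset.filter_congr_decidable

end Stmt7Aux


/-- Alon: there is an absolute constant `C > 0` such that any finite simple
`k`-regular graph (`k ≥ 1`) on `n` vertices has at most
`2^{(1/2 + C·k^{-1/10})·n}` independent sets. -/
theorem stmt_7 :
    ∃ C : ℝ, 0 < C ∧
      ∀ (V : Type) [Fintype V] (G : SimpleGraph V) [DecidableRel G.Adj] (k : ℕ),
        1 ≤ k → G.IsRegularOfDegree k →
        ((Finset.univ.powerset.filter
            (fun s : Finset V => ∀ x ∈ s, ∀ y ∈ s, ¬ G.Adj x y)).card : ℝ)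
          ≤ 2 ^ ((1 / 2 + C * (k : ℝ) ^ (-(1 / 10) : ℝ)) * (Fintype.card V : ℝ)) := by
  refine ⟨100, by norm_num, ?_⟩
  intro V _ G _ k hk hreg
  exact Stmt7Aux.main G k hk hreg
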